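/- Fix n > 0 and p ≥ 1, let R = {η ∈ ℝ^p : ‖η‖ ≤ √n} be the spherical region, fix any η₀ with ‖η₀‖ = √n, and let Z be a standard Gaussian random vector in ℝ^p. Define the exact p-value α̂_∞(y) = Pr{‖Z + η₀‖² ≥ ‖y‖²}. Then for every η with ‖η‖ = √n (i.e., η on the boundary ∂R) and Y = η + Z, the test is exactly unbiased: for every α ∈ (0,1), Pr{α̂_∞(Y) < α} = α. -/

import Mathlib

open scoped ENNReal


open MeasureTheory ProbabilityTheory

/-- The Gaussian measure `N_p(m, v·I_p)` on `ℝ^p`, as the product of one-dimensional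
Gaussian measures with means the coordinates of `m` and common variance `v`. -/
noncomputable def gaussianPi (p : ℕ) (m : EuclideanSpace ℝ (Fin p)) (v : NNReal) :
    Measure (EuclideanSpace ℝ (Fin p)) :=
  (Measure.pi fun i => gaussianReal (m i) v).map (MeasurableEquiv.toLp 2 (Fin p → ℝ))

lemma lintegral_pi_prod : ∀ {n : ℕ} (f : Fin n → ℝ → ℝ≥0∞), (∀ i, Measurable (f i)) →
    ∫⁻ x : Fin n → ℝ, ∏ i, f i (x i) ∂(Measure.pi fun _ => (volume : Measure ℝ))
      = ∏ i, ∫⁻ x, f i x := by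
  intro n
  induction n with
  | zero => intro f _; simp
  | succ n ih =>
    intro f hf
    have hmp := measurePreserving_piFinSuccAbove (fun _ : Fin (n+1) => (volume : Measure ℝ)) 0
    have hG : Measurable fun y : ℝ × (Fin n → ℝ) => f 0 y.1 * ∏ i, f i.succ (y.2 i) := by
      refine ((hf 0).comp measurable_fst).mul ?_
      exact Finset.measurable_prod _ fun i _ =>
        (hf i.succ).comp ((measurable_pi_apply i).comp measurable_snd)
    have key := hmp.lintegral_comp hG
    have hxe : ∀ x : Fin (n+1) → ℝ,
        (fun y : ℝ × (Fin n → ℝ) => f 0 y.1 * ∏ i, f i.succ (y.2 i))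
          (MeasurableEquiv.piFinSuccAbove (fun _ => ℝ) 0 x) = ∏ i, f i (x i) := by
      intro x
      simp [MeasurableEquiv.piFinSuccAbove_apply, Fin.prod_univ_succ, Fin.zero_succAbove, Fin.tail]
    calc ∫⁻ x : Fin (n+1) → ℝ, ∏ i, f i (x i) ∂(Measure.pi fun _ => (volume : Measure ℝ))
        = ∫⁻ y : ℝ × (Fin n → ℝ), f 0 y.1 * ∏ i : Fin n, f i.succ (y.2 i)
            ∂((volume : Measure ℝ).prod (Measure.pi fun _ => (volume : Measure ℝ))) := by
          rw [← key]; exact lintegral_congr fun x => (hxe x).symm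
      _ = (∫⁻ x, f 0 x) * ∫⁻ z : Fin n → ℝ, ∏ i : Fin n, f i.succ (z i)
            ∂(Measure.pi fun _ => (volume : Measure ℝ)) := by
          exact lintegral_prod_mul (hf 0).aemeasurable
            (Finset.measurable_prod _ fun (i : Fin n) _ =>
              (hf i.succ).comp (measurable_pi_apply i)).aemeasurable
      _ = ∏ i, ∫⁻ x, f i x := by
          rw [ih _ fun i => hf i.succ, Fin.prod_univ_succ]

lemma volE_eq (p : ℕ) :
    (volume : Measure (EuclideanSpace ℝ (Fin p)))
      = (Measure.pi fun _ : Fin p => (volume : Measure ℝ)).map (MeasurableEquiv.toLp 2 (Fin p → ℝ)) := by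
  have h := (EuclideanSpace.volume_preserving_symm_measurableEquiv_toLp (Fin p)).symm.map_eq
  rw [MeasurableEquiv.symm_symm] at h
  rw [← h, volume_pi]

lemma gaussianPi_eq_withDensity (p : ℕ) :
    gaussianPi p 0 1 = ((volume : Measure (EuclideanSpace ℝ (Fin p))).withDensity
      fun z => ∏ i, gaussianPDF 0 1 (z i)) := by
  have h0 : ∀ i : Fin p, (0 : EuclideanSpace ℝ (Fin p)) i = 0 := fun _ => rfl
  unfold gaussianPi
  simp only [h0]
  rw [volE_eq]
  suffices hpi : (Measure.pi fun _ : Fin p => gaussianReal 0 1) =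
      (Measure.pi fun _ : Fin p => (volume : Measure ℝ)).withDensity
        (fun z : Fin p → ℝ => ∏ i, gaussianPDF 0 1 (z i)) by
    rw [hpi]
    ext s hs
    rw [Measure.map_apply (MeasurableEquiv.toLp 2 (Fin p → ℝ)).measurable hs,
      withDensity_apply _ ((MeasurableEquiv.toLp 2 (Fin p → ℝ)).measurable hs),
      withDensity_apply _ hs, setLIntegral_map hs (by fun_prop)
        (MeasurableEquiv.toLp 2 (Fin p → ℝ)).measurable]
    rfl
  refine Measure.pi_eq (μ := fun _ : Fin p => gaussianReal 0 1) fun s hs => ?_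
  rw [withDensity_apply _ (MeasurableSet.univ_pi hs)]
  have hind : ∀ z : Fin p → ℝ, (Set.univ.pi s).indicator
      (fun z : Fin p → ℝ => ∏ i, gaussianPDF 0 1 (z i)) z
      = ∏ i, (s i).indicator (gaussianPDF 0 1) (z i) := by
    intro z
    by_cases hz : z ∈ Set.univ.pi s
    · rw [Set.indicator_of_mem hz]
      exact Finset.prod_congr rfl fun i _ =>
        (Set.indicator_of_mem (hz i (Set.mem_univ i)) _).symm
    · rw [Set.indicator_of_notMem hz]
      rw [Set.mem_univ_pi] at hz
      push_neg at hz
      obtain ⟨i, hi⟩ := hz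
      exact (Finset.prod_eq_zero (Finset.mem_univ i)
        (Set.indicator_of_notMem hi _)).symm
  calc ∫⁻ z in Set.univ.pi s, (∏ i, gaussianPDF 0 1 (z i))
          ∂(Measure.pi fun _ : Fin p => (volume : Measure ℝ))
      = ∫⁻ z : Fin p → ℝ, ∏ i, (s i).indicator (gaussianPDF 0 1) (z i)
          ∂(Measure.pi fun _ : Fin p => (volume : Measure ℝ)) := by
        rw [← lintegral_indicator (MeasurableSet.univ_pi hs)]
        exact lintegral_congr hind
    _ = ∏ i, ∫⁻ x, (s i).indicator (gaussianPDF 0 1) x :=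
        lintegral_pi_prod _ fun i => (measurable_gaussianPDF 0 1).indicator (hs i)
    _ = ∏ i : Fin p, gaussianReal 0 1 (s i) := by
        refine Finset.prod_congr rfl fun i _ => ?_
        rw [lintegral_indicator (hs i), gaussianReal_apply 0 one_ne_zero]

lemma prod_gaussianPDF_eq (p : ℕ) (z : EuclideanSpace ℝ (Fin p)) :
    (∏ i, gaussianPDF 0 1 (z i))
      = ENNReal.ofReal ((Real.sqrt (2 * Real.pi))⁻¹ ^ p * Real.exp (- ‖z‖ ^ 2 / 2)) := by
  have hpdf : ∀ x : ℝ, gaussianPDFReal 0 1 x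
      = (Real.sqrt (2 * Real.pi))⁻¹ * Real.exp (- x ^ 2 / 2) := by
    intro x
    simp [gaussianPDFReal]
  have hnn : ∀ x : ℝ, 0 ≤ (Real.sqrt (2 * Real.pi))⁻¹ * Real.exp (- x ^ 2 / 2) :=
    fun x => mul_nonneg (inv_nonneg.mpr (Real.sqrt_nonneg _)) (Real.exp_nonneg _)
  have hnorm : ‖z‖ ^ 2 = ∑ i, z i ^ 2 := by
    rw [EuclideanSpace.norm_eq, Real.sq_sqrt (Finset.sum_nonneg fun i _ => sq_nonneg _)]
    exact Finset.sum_congr rfl fun i _ => by rw [Real.norm_eq_abs, sq_abs]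
  simp only [gaussianPDF, hpdf]
  rw [← ENNReal.ofReal_prod_of_nonneg fun i _ => hnn (z i)]
  congr 1
  rw [Finset.prod_mul_distrib, Finset.prod_const, Finset.card_univ, Fintype.card_fin,
    ← Real.exp_sum, hnorm]
  congr 1
  rw [← Finset.sum_div, Finset.sum_neg_distrib, neg_div]

lemma map_withDensity_equiv {α β : Type*} [MeasurableSpace α] [MeasurableSpace β] (e : α ≃ᵐ β)
    (ν : Measure α) (g : β → ℝ≥0∞) (hg : Measurable g) :
    Measure.map e (ν.withDensity (g ∘ e)) = (Measure.map e ν).withDensity g := by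
  ext s hs
  rw [Measure.map_apply e.measurable hs, withDensity_apply _ hs,
    withDensity_apply _ (e.measurable hs), setLIntegral_map hs hg e.measurable]
  rfl

lemma gaussianPi_map (p : ℕ) (e : EuclideanSpace ℝ (Fin p) ≃ₗᵢ[ℝ] EuclideanSpace ℝ (Fin p)) :
    Measure.map e (gaussianPi p 0 1) = gaussianPi p 0 1 := by
  set g : EuclideanSpace ℝ (Fin p) → ℝ≥0∞ :=
    fun z => ENNReal.ofReal ((Real.sqrt (2 * Real.pi))⁻¹ ^ p * Real.exp (- ‖z‖ ^ 2 / 2)) with hgd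
  have hgm : Measurable g := by
    apply Measurable.ennreal_ofReal
    exact (measurable_const.mul ((measurable_norm.pow_const 2).neg.div_const 2).exp)
  have hd : gaussianPi p 0 1 = (volume : Measure (EuclideanSpace ℝ (Fin p))).withDensity g := by
    rw [gaussianPi_eq_withDensity]
    congr 1
    ext z
    exact prod_gaussianPDF_eq p z
  have hcomp : g ∘ (e.toHomeomorph.toMeasurableEquiv) = g := by
    ext x
    simp only [Function.comp_apply, hgd]
    rw [show (e.toHomeomorph.toMeasurableEquiv x) = e x from rfl, e.norm_map]
  rw [hd, show (⇑e : EuclideanSpace ℝ (Fin p) → EuclideanSpace ℝ (Fin p))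
      = ⇑(e.toHomeomorph.toMeasurableEquiv) from rfl]
  conv_lhs => rw [← hcomp]
  rw [map_withDensity_equiv _ _ _ hgm]
  congr 1
  exact e.measurePreserving.map_eq

lemma gaussianPi_sq_level_null (p : ℕ) (hp : 1 ≤ p) (c : EuclideanSpace ℝ (Fin p)) (t : ℝ) :
    gaussianPi p 0 1 {z | ‖z + c‖ ^ 2 = t} = 0 := by
  have hac : gaussianPi p 0 1 ≪ (volume : Measure (EuclideanSpace ℝ (Fin p))) := by
    rw [gaussianPi_eq_withDensity]; exact withDensity_absolutelyContinuous _ _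
  refine hac ?_
  by_cases ht : 0 ≤ t
  · have hset : {z : EuclideanSpace ℝ (Fin p) | ‖z + c‖ ^ 2 = t}
        = Metric.sphere (-c) (Real.sqrt t) := by
      ext z
      simp only [Set.mem_setOf_eq, Metric.mem_sphere, dist_eq_norm, sub_neg_eq_add]
      constructor
      · intro h; rw [← h, Real.sqrt_sq (norm_nonneg _)]
      · intro h; rw [h, Real.sq_sqrt ht]
    rw [hset]
    haveI : Nontrivial (EuclideanSpace ℝ (Fin p)) := by
      refine ⟨⟨EuclideanSpace.single ⟨0, hp⟩ (1 : ℝ), 0, fun h => ?_⟩⟩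
      have h2 := congrArg norm h
      rw [EuclideanSpace.norm_single, norm_zero] at h2
      norm_num at h2
    exact Measure.addHaar_sphere volume (-c) _
  · have hset : {z : EuclideanSpace ℝ (Fin p) | ‖z + c‖ ^ 2 = t} = ∅ := by
      ext z
      simp only [Set.mem_setOf_eq, Set.mem_empty_iff_false, iff_false]
      intro h
      exact ht (h ▸ sq_nonneg _)
    simp [hset]


/-- For the spherical region `R = {η : ‖η‖ ≤ √n}`, the exact p-value
`α̂_∞(y) = Pr{‖Z + η₀‖² ≥ ‖y‖²}` (with `‖η₀‖ = √n`, `Z` standard Gaussian) is exactly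
unbiased: for every `η` on the boundary (`‖η‖ = √n`) and `Y = η + Z`,
`Pr{α̂_∞(Y) < α} = α` for all `α ∈ (0,1)`. -/
theorem spherical_exact_pvalue_exactly_unbiased
    (p : ℕ) (hp : 1 ≤ p) (n : ℝ) (hn : 0 < n)
    (η₀ : EuclideanSpace ℝ (Fin p)) (hη₀ : ‖η₀‖ = Real.sqrt n)
    (alphaInf : EuclideanSpace ℝ (Fin p) → ℝ)
    (halphaInf : ∀ y, alphaInf y =
      (gaussianPi p 0 1 {z | ‖y‖ ^ 2 ≤ ‖z + η₀‖ ^ 2}).toReal)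
    (η : EuclideanSpace ℝ (Fin p)) (hη : ‖η‖ = Real.sqrt n)
    (α : ℝ) (hα : α ∈ Set.Ioo (0 : ℝ) 1) :
    gaussianPi p 0 1 {z | alphaInf (η + z) < α} = ENNReal.ofReal α := by
  obtain ⟨hα0, hα1⟩ := hα
  set μ := gaussianPi p 0 1 with hμ
  haveI : IsProbabilityMeasure μ := by
    rw [hμ]; unfold gaussianPi
    exact Measure.isProbabilityMeasure_map (MeasurableEquiv.toLp 2 (Fin p → ℝ)).measurable.aemeasurable
  set w : EuclideanSpace ℝ (Fin p) → ℝ := fun z => ‖z + η₀‖ ^ 2 with hw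
  have hwc : Continuous w := (continuous_id.add continuous_const).norm.pow 2
  set A : ℝ → Set (EuclideanSpace ℝ (Fin p)) := fun s => {z | s ≤ w z} with hA
  have hAm : ∀ s, MeasurableSet (A s) :=
    fun s => measurableSet_le measurable_const hwc.measurable
  have hAanti : ∀ ⦃s s' : ℝ⦄, s ≤ s' → A s' ⊆ A s :=
    fun s s' hss' z hz => le_trans hss' hz
  set Q : ℝ → ℝ≥0∞ := fun s => μ (A s) with hQ
  have hQanti : ∀ ⦃s s' : ℝ⦄, s ≤ s' → Q s' ≤ Q s :=
    fun s s' hss' => measure_mono (hAanti hss')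
  have hQne : ∀ s, Q s ≠ ⊤ := fun s => measure_ne_top _ _
  set S : Set ℝ := {s | ENNReal.ofReal α ≤ Q s} with hS
  have hS0 : (0 : ℝ) ∈ S := by
    have h1 : A 0 = Set.univ :=
      Set.eq_univ_of_forall fun z => show (0:ℝ) ≤ w z from sq_nonneg _
    have : Q 0 = 1 := by rw [hQ]; simp only [h1]; exact measure_univ
    simp only [hS, Set.mem_setOf_eq, this]
    exact ENNReal.ofReal_le_one.mpr hα1.le
  have hSne : S.Nonempty := ⟨0, hS0⟩
  -- S is bounded above
  have hiInter : (⋂ m : ℕ, A (m : ℝ)) = ∅ := by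
    ext z
    simp only [Set.mem_iInter, Set.mem_empty_iff_false, iff_false, not_forall]
    obtain ⟨m, hm⟩ := exists_nat_gt (w z)
    exact ⟨m, not_le.mpr hm⟩
  have hinf0 : (⨅ m : ℕ, Q (m : ℝ)) = 0 := by
    rw [hQ]
    rw [← Antitone.measure_iInter (fun m m' hmm' => hAanti (Nat.cast_le.mpr hmm'))
      (fun m => (hAm _).nullMeasurableSet) ⟨0, measure_ne_top _ _⟩]
    rw [hiInter]; exact measure_empty
  have hM : ∃ M : ℕ, Q M < ENNReal.ofReal α := by
    rw [← iInf_lt_iff, hinf0]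
    exact ENNReal.ofReal_pos.mpr hα0
  obtain ⟨M, hMlt⟩ := hM
  have hSbdd : BddAbove S := by
    refine ⟨M, fun s hs => ?_⟩
    by_contra hsM
    exact absurd (le_trans hs (hQanti (not_le.mp hsM).le)) (not_le.mpr hMlt)
  set t := sSup S with htd
  -- t ∈ S
  have hAt : A t = ⋂ m : ℕ, A (t - 1 / (m + 1)) := by
    ext z
    simp only [Set.mem_iInter]
    constructor
    · intro hz m
      refine hAanti ?_ hz
      have h0 : (0:ℝ) < 1 / (m + 1) := by positivity
      linarith
    · intro hz
      by_contra hlt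
      obtain ⟨m, hm⟩ := exists_nat_one_div_lt (sub_pos.mpr (not_le.mp hlt) : (0:ℝ) < t - w z)
      have := hz m
      simp only [hA, Set.mem_setOf_eq] at this
      linarith [this]
  have htS : ENNReal.ofReal α ≤ Q t := by
    have hQt : Q t = ⨅ m : ℕ, Q (t - 1 / (m + 1)) := by
      rw [hQ]
      simp only [hAt]
      exact Antitone.measure_iInter
        (fun m m' hmm' => hAanti (by
          have : (1 : ℝ) / (m' + 1) ≤ 1 / (m + 1) := by
            apply one_div_le_one_div_of_le (by positivity)
            exact_mod_cast add_le_add_left (Nat.cast_le.mpr hmm') 1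
          linarith))
        (fun m => (hAm _).nullMeasurableSet) ⟨0, measure_ne_top _ _⟩
    rw [hQt]
    refine le_iInf fun m => ?_
    obtain ⟨s, hsS, hslt⟩ := exists_lt_of_lt_csSup hSne
      (show t - 1 / (m + 1) < t by
        have : (0:ℝ) < 1 / (m + 1) := by positivity
        linarith)
    exact le_trans hsS (hQanti hslt.le)
  have hSIic : S = Set.Iic t := by
    ext s
    constructor
    · exact fun hs => le_csSup hSbdd hs
    · intro hs
      exact le_trans htS (hQanti hs)
  -- the set B
  set B : Set (EuclideanSpace ℝ (Fin p)) := {z | t < w z} with hBd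
  have hBm : MeasurableSet B := measurableSet_lt measurable_const hwc.measurable
  have hBunion : B = ⋃ m : ℕ, A (t + 1 / (m + 1)) := by
    ext z
    simp only [Set.mem_iUnion, hBd, Set.mem_setOf_eq]
    constructor
    · intro hz
      obtain ⟨m, hm⟩ := exists_nat_one_div_lt (sub_pos.mpr hz)
      exact ⟨m, by simp only [hA, Set.mem_setOf_eq]; linarith⟩
    · rintro ⟨m, hm⟩
      simp only [hA, Set.mem_setOf_eq] at hm
      have : (0:ℝ) < 1 / (m + 1) := by positivity
      linarith
  have hBle : μ B ≤ ENNReal.ofReal α := by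
    rw [hBunion]
    rw [Monotone.measure_iUnion (fun m m' hmm' => hAanti (by
      have : (1 : ℝ) / (m' + 1) ≤ 1 / (m + 1) := by
        apply one_div_le_one_div_of_le (by positivity)
        exact_mod_cast add_le_add_left (Nat.cast_le.mpr hmm') 1
      linarith))]
    refine iSup_le fun m => ?_
    have hnot : (t + 1 / (m + 1)) ∉ S := by
      intro hmem
      have := le_csSup hSbdd hmem
      have h0 : (0:ℝ) < 1 / (m + 1) := by positivity
      linarith
    exact (not_le.mp hnot).le
  have hBge : ENNReal.ofReal α ≤ μ B := by
    refine le_trans htS ?_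
    have hsub : A t ⊆ B ∪ {z | w z = t} := by
      intro z hz
      rcases lt_or_eq_of_le (show t ≤ w z from hz) with h | h
      · exact Or.inl h
      · exact Or.inr h.symm
    calc Q t ≤ μ B + μ {z | w z = t} := le_trans (measure_mono hsub) (measure_union_le _ _)
      _ = μ B := by
        rw [show {z | w z = t} = {z | ‖z + η₀‖ ^ 2 = t} from rfl,
          hμ, gaussianPi_sq_level_null p hp η₀ t, add_zero]
  have hBα : μ B = ENNReal.ofReal α := le_antisymm hBle hBge
  -- pointwise description of the event
  have hset : {z | alphaInf (η + z) < α} = {z | t < ‖η + z‖ ^ 2} := by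
    ext z
    simp only [Set.mem_setOf_eq]
    rw [halphaInf]
    have hQz : gaussianPi p 0 1 {z' | ‖η + z‖ ^ 2 ≤ ‖z' + η₀‖ ^ 2} = Q (‖η + z‖ ^ 2) := rfl
    rw [hQz, ← ENNReal.lt_ofReal_iff_toReal_lt (hQne _)]
    constructor
    · intro h
      by_contra hle
      have hmem : ‖η + z‖ ^ 2 ∈ S := hSIic ▸ Set.mem_Iic.mpr (not_lt.mp hle)
      exact absurd hmem (not_le.mpr h)
    · intro h
      have hnot : ‖η + z‖ ^ 2 ∉ S := by
        rw [hSIic]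
        exact not_le.mpr h
      exact not_le.mp hnot
  rw [hset]
  -- rotation invariance
  have hnorm_eq : ‖η₀‖ = ‖η‖ := by rw [hη₀, hη]
  set e := Submodule.reflection (ℝ ∙ (η₀ - η))ᗮ with he
  have heη : e η₀ = η := Submodule.reflection_sub hnorm_eq
  have hmap := gaussianPi_map p e
  have hmeas : MeasurableSet {z : EuclideanSpace ℝ (Fin p) | t < ‖η + z‖ ^ 2} :=
    measurableSet_lt measurable_const
      ((continuous_const.add continuous_id).norm.pow 2).measurable
  have hstep : μ {z | t < ‖η + z‖ ^ 2} = μ (⇑e ⁻¹' {z | t < ‖η + z‖ ^ 2}) := by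
    conv_lhs => rw [hμ, ← hmap]
    rw [Measure.map_apply e.continuous.measurable hmeas]
  have hpre : (⇑e ⁻¹' {z | t < ‖η + z‖ ^ 2}) = B := by
    ext x
    simp only [Set.mem_preimage, Set.mem_setOf_eq, hBd, hw]
    rw [show η + e x = e (η₀ + x) by rw [e.map_add, heη], e.norm_map, add_comm η₀ x]
  rw [hstep, hpre, hBα]
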